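/- Let f(z) = Σ_{j=1}^N Q_j(z) exp(b_j z^d + P_j(z)) with d ≥ 3, Q_j nonzero polynomials, deg(P_j) < d, and distinct nonzero b_j. Let ν = d − 5/2, and let E₁ = ∪_{j≠k} P_{j,k}⁻¹({w : |Re w| < |w|^{ν/d}}) where P_{j,k}(z) = (b_j − b_k)z^d + P_j(z) − P_k(z). For every ε > 0 there exists R₀ > 0 such that: for every z ∉ E₁ with |z| ≥ R₀, if m is an index maximizing Re(b_m z^d + P_m(z)), then |f(z)/(Q_m(z) exp(b_m z^d + P_m(z))) − 1| < ε. -/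

import Mathlib

open Polynomial Filter Real Bornology

lemma aux_upper (p : Polynomial ℂ) : ∃ C > (0:ℝ), ∀ z : ℂ, 1 ≤ ‖z‖ →
    ‖p.eval z‖ ≤ C * ‖z‖ ^ p.natDegree := by
  refine ⟨(∑ i ∈ Finset.range (p.natDegree + 1), ‖p.coeff i‖) + 1, by positivity, fun z hz => ?_⟩
  rw [Polynomial.eval_eq_sum_range]
  calc ‖∑ i ∈ Finset.range (p.natDegree + 1), p.coeff i * z ^ i‖
      ≤ ∑ i ∈ Finset.range (p.natDegree + 1), ‖p.coeff i * z ^ i‖ := norm_sum_le _ _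
    _ ≤ ∑ i ∈ Finset.range (p.natDegree + 1), ‖p.coeff i‖ * ‖z‖ ^ p.natDegree := by
        refine Finset.sum_le_sum fun i hi => ?_
        rw [norm_mul, norm_pow]
        exact mul_le_mul_of_nonneg_left
          (pow_le_pow_right₀ hz (Nat.lt_succ_iff.mp (Finset.mem_range.mp hi)))
          (norm_nonneg _)
    _ = (∑ i ∈ Finset.range (p.natDegree + 1), ‖p.coeff i‖) * ‖z‖ ^ p.natDegree := by
        rw [Finset.sum_mul]
    _ ≤ _ := by
        have : (0:ℝ) ≤ ‖z‖ ^ p.natDegree := by positivity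
        nlinarith

lemma aux_lower (p : Polynomial ℂ) (hp : p ≠ 0) : ∃ c > (0:ℝ),
    ∀ᶠ z in cobounded ℂ, c * ‖z‖ ^ p.natDegree ≤ ‖p.eval z‖ := by
  have ha : p.leadingCoeff ≠ 0 := Polynomial.leadingCoeff_ne_zero.mpr hp
  have ha' : (0:ℝ) < ‖p.leadingCoeff‖ := norm_pos_iff.mpr ha
  have hev : ∀ z : ℂ, p.eval z = (p.eraseLead).eval z + p.leadingCoeff * z ^ p.natDegree := by
    intro z
    conv_lhs => rw [← p.eraseLead_add_monomial_natDegree_leadingCoeff]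
    rw [Polynomial.eval_add, Polynomial.eval_monomial]
  by_cases hq : p.eraseLead = 0
  · refine ⟨‖p.leadingCoeff‖, ha', ?_⟩
    filter_upwards with z
    rw [hev z, hq]
    simp [norm_mul]
  · have hD : 1 ≤ p.natDegree := by
      by_contra h
      push_neg at h
      have h0 : p.natDegree = 0 := by omega
      obtain ⟨a, rfl⟩ := Polynomial.natDegree_eq_zero.mp h0
      exact hq (Polynomial.eraseLead_C a)
    obtain ⟨C, hC, hCb⟩ := aux_upper p.eraseLead
    have hqD : p.eraseLead.natDegree ≤ p.natDegree - 1 := Polynomial.eraseLead_natDegree_le p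
    refine ⟨‖p.leadingCoeff‖ / 2, by positivity, ?_⟩
    have hev' : ∀ᶠ z : ℂ in cobounded ℂ, max 1 (2 * C / ‖p.leadingCoeff‖) ≤ ‖z‖ :=
      tendsto_norm_cobounded_atTop.eventually_ge_atTop _
    filter_upwards [hev'] with z hz
    have hz1 : 1 ≤ ‖z‖ := le_trans (le_max_left _ _) hz
    have hz2 : 2 * C / ‖p.leadingCoeff‖ ≤ ‖z‖ := le_trans (le_max_right _ _) hz
    have hq1 : ‖p.eraseLead.eval z‖ ≤ C * ‖z‖ ^ (p.natDegree - 1) :=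
      le_trans (hCb z hz1) (mul_le_mul_of_nonneg_left (pow_le_pow_right₀ hz1 hqD) hC.le)
    have hzD : ‖z‖ ^ (p.natDegree - 1) * ‖z‖ = ‖z‖ ^ p.natDegree := by
      rw [← pow_succ]
      congr 1
      omega
    have hkey : C * ‖z‖ ^ (p.natDegree - 1) ≤ ‖p.leadingCoeff‖ / 2 * ‖z‖ ^ p.natDegree := by
      rw [← hzD, ← mul_assoc]
      rw [div_le_iff₀ ha'] at hz2
      nlinarith [pow_nonneg (norm_nonneg z) (p.natDegree - 1)]
    have hn : ‖p.leadingCoeff * z ^ p.natDegree‖ = ‖p.leadingCoeff‖ * ‖z‖ ^ p.natDegree := by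
      rw [norm_mul, norm_pow]
    calc ‖p.leadingCoeff‖ / 2 * ‖z‖ ^ p.natDegree
        ≤ ‖p.leadingCoeff‖ * ‖z‖ ^ p.natDegree - C * ‖z‖ ^ (p.natDegree - 1) := by nlinarith
      _ ≤ ‖p.leadingCoeff * z ^ p.natDegree‖ - ‖p.eraseLead.eval z‖ := by
          rw [hn]; linarith [hq1]
      _ ≤ ‖p.eval z‖ := by
          rw [hev z]
          have h3 : ‖p.leadingCoeff * z ^ p.natDegree‖ ≤
              ‖(p.eraseLead).eval z + p.leadingCoeff * z ^ p.natDegree‖ + ‖(p.eraseLead).eval z‖ := by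
            have := norm_sub_le ((p.eraseLead).eval z + p.leadingCoeff * z ^ p.natDegree)
              ((p.eraseLead).eval z)
            simpa using this
          linarith


lemma aux_tendsto (K : ℕ) (α : ℝ) (hα : 0 < α) :
    Tendsto (fun r : ℝ => r ^ K * Real.exp (-(r ^ α))) atTop (nhds 0) := by
  set n := ⌈(K : ℝ) / α⌉₊ with hn
  have h1 := tendsto_pow_mul_exp_neg_atTop_nhds_zero n
  have h2 := tendsto_rpow_atTop hα
  have h3 : Tendsto (fun r : ℝ => (r ^ α) ^ n * Real.exp (-(r ^ α))) atTop (nhds 0) :=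
    h1.comp h2
  refine squeeze_zero' ?_ ?_ h3
  · filter_upwards [eventually_ge_atTop (0:ℝ)] with r hr
    positivity
  · filter_upwards [eventually_ge_atTop (1:ℝ)] with r hr
    have hr0 : (0:ℝ) ≤ r := by linarith
    refine mul_le_mul_of_nonneg_right ?_ (Real.exp_nonneg _)
    have hKn : (K : ℝ) ≤ α * n := by
      have := Nat.le_ceil ((K : ℝ) / α)
      rw [div_le_iff₀ hα] at this
      rw [← hn] at this
      linarith [this]
    calc r ^ K = r ^ (K : ℝ) := (Real.rpow_natCast r K).symm
      _ ≤ r ^ (α * n) := Real.rpow_le_rpow_of_exponent_le hr hKn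
      _ = (r ^ α) ^ n := by rw [Real.rpow_mul hr0, Real.rpow_natCast]

/-- Approximation of f by its dominant term: for z outside E₁ with |z| large,
if m maximizes Re(b_m z^d + P_m(z)), then f(z)/(Q_m(z)exp(b_m z^d + P_m(z)))
is within ε of 1. -/
theorem stmt_19 (d : ℕ) (hd : 3 ≤ d) (N : ℕ) (hN : 1 ≤ N)
    (b : Fin N → ℂ) (hb0 : ∀ j, b j ≠ 0) (hbdist : ∀ j k, j ≠ k → b j ≠ b k)
    (Q P : Fin N → Polynomial ℂ) (hQ : ∀ j, Q j ≠ 0) (hdegP : ∀ j, (P j).degree < d)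
    (f : ℂ → ℂ)
    (hf : ∀ z, f z = ∑ j : Fin N,
      (Q j).eval z * Complex.exp (b j * z ^ d + (P j).eval z))
    (Pjk : Fin N → Fin N → ℂ → ℂ)
    (hPjk : ∀ j k z, Pjk j k z = (b j - b k) * z ^ d + ((P j).eval z - (P k).eval z)) :
    ∀ ε > (0:ℝ), ∃ R₀ > (0:ℝ), ∀ z : ℂ, R₀ ≤ ‖z‖ →
      (∀ j k, j ≠ k →
        ‖Pjk j k z‖ ^ (((d : ℝ) - 5/2) / d) ≤ |(Pjk j k z).re|) →
      ∀ m : Fin N,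
        (∀ j, (b j * z ^ d + (P j).eval z).re ≤ (b m * z ^ d + (P m).eval z).re) →
        ‖f z / ((Q m).eval z * Complex.exp (b m * z ^ d + (P m).eval z)) - 1‖
          < ε := by
  intro ε hε
  have hdR : (3:ℝ) ≤ (d:ℝ) := by exact_mod_cast hd
  set α : ℝ := ((d : ℝ) - 5/2) / d with hαdef
  have hα : 0 < α := by
    apply div_pos <;> linarith
  have hNR : (0:ℝ) < (N:ℝ) := by exact_mod_cast hN
  have hδ : (0:ℝ) < ε / (2 * N) := by positivity
  -- constants for upper bounds on Q j
  choose Cq hCqpos hCq using fun j => aux_upper (Q j)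
  -- constants for lower bounds on Q m
  choose cq hcqpos hcq using fun m => aux_lower (Q m) (hQ m)
  -- the polynomials p_{jk}
  set pp : Fin N → Fin N → Polynomial ℂ :=
    fun j k => Polynomial.C (b j - b k) * Polynomial.X ^ d + (P j - P k) with hpp
  have hppeval : ∀ j k z, (pp j k).eval z = Pjk j k z := by
    intro j k z
    rw [hPjk]
    simp [hpp]
  have hppdeg : ∀ j k, j ≠ k → (pp j k).degree = d := by
    intro j k hjk
    have ha : b j - b k ≠ 0 := sub_ne_zero.mpr (hbdist j k hjk)
    have h1 : (Polynomial.C (b j - b k) * Polynomial.X ^ d : Polynomial ℂ).degree = d :=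
      Polynomial.degree_C_mul_X_pow d ha
    have h2 : (P j - P k).degree < (d : WithBot ℕ) :=
      lt_of_le_of_lt (Polynomial.degree_sub_le _ _) (max_lt (hdegP j) (hdegP k))
    rw [hpp]
    rw [Polynomial.degree_add_eq_left_of_degree_lt (by rw [h1]; exact h2), h1]
  have hppne : ∀ j k, j ≠ k → pp j k ≠ 0 := by
    intro j k hjk h0
    have := hppdeg j k hjk
    rw [h0, Polynomial.degree_zero] at this
    exact absurd this (by simp)
  have hppnat : ∀ j k, j ≠ k → (pp j k).natDegree = d := fun j k hjk =>
    Polynomial.natDegree_eq_of_degree_eq_some (hppdeg j k hjk)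
  -- lower bounds for pp
  have hplow : ∀ j k, j ≠ k → ∀ᶠ z in cobounded ℂ, ‖z‖ ≤ ‖Pjk j k z‖ := by
    intro j k hjk
    obtain ⟨c, hc, hev⟩ := aux_lower (pp j k) (hppne j k hjk)
    have h1 : ∀ᶠ z : ℂ in cobounded ℂ, max 1 (1/c) ≤ ‖z‖ :=
      tendsto_norm_cobounded_atTop.eventually_ge_atTop _
    filter_upwards [hev, h1] with z h2 h3
    have hz1 : 1 ≤ ‖z‖ := le_trans (le_max_left _ _) h3
    have hz2 : 1/c ≤ ‖z‖ := le_trans (le_max_right _ _) h3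
    rw [hppnat j k hjk] at h2
    rw [← hppeval j k z]
    have h4 : ‖z‖ * ‖z‖ ≤ ‖z‖ ^ d := by
      calc ‖z‖ * ‖z‖ = ‖z‖ ^ 2 := (sq ‖z‖).symm
        _ ≤ ‖z‖ ^ d := pow_le_pow_right₀ hz1 (by omega)
    have h5 : (1:ℝ) ≤ c * ‖z‖ := by
      rw [div_le_iff₀ hc] at hz2
      nlinarith
    nlinarith [norm_nonneg z]
  -- smallness of the dominating function
  have hsmall : ∀ j m : Fin N, ∀ᶠ z : ℂ in cobounded ℂ,
      Cq j * ‖z‖ ^ (Q j).natDegree * Real.exp (-(‖z‖ ^ α)) ≤ ε / (2 * N) * cq m := by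
    intro j m
    have h1 : Tendsto (fun r : ℝ => Cq j * (r ^ (Q j).natDegree * Real.exp (-(r ^ α))))
        atTop (nhds (Cq j * 0)) := (aux_tendsto _ α hα).const_mul _
    rw [mul_zero] at h1
    have h2 : ∀ᶠ r : ℝ in atTop,
        Cq j * (r ^ (Q j).natDegree * Real.exp (-(r ^ α))) < ε / (2 * N) * cq m :=
      h1.eventually_lt_const (mul_pos hδ (hcqpos m))
    filter_upwards [tendsto_norm_cobounded_atTop.eventually h2] with z hz
    calc Cq j * ‖z‖ ^ (Q j).natDegree * Real.exp (-(‖z‖ ^ α))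
        = Cq j * (‖z‖ ^ (Q j).natDegree * Real.exp (-(‖z‖ ^ α))) := by ring
      _ ≤ ε / (2 * N) * cq m := hz.le
  -- combine all eventual facts
  have hBig : ∀ᶠ z : ℂ in cobounded ℂ,
      (1 ≤ ‖z‖) ∧ (∀ m, cq m ≤ ‖(Q m).eval z‖) ∧
      (∀ j k, j ≠ k → ‖z‖ ≤ ‖Pjk j k z‖) ∧
      (∀ j m, Cq j * ‖z‖ ^ (Q j).natDegree * Real.exp (-(‖z‖ ^ α)) ≤ ε / (2 * N) * cq m) := by
    have hE2 : ∀ᶠ z : ℂ in cobounded ℂ, ∀ m, cq m ≤ ‖(Q m).eval z‖ := by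
      refine Filter.eventually_all.mpr fun m => ?_
      filter_upwards [hcq m, tendsto_norm_cobounded_atTop.eventually_ge_atTop 1] with z h1 h2
      calc cq m = cq m * 1 := (mul_one _).symm
        _ ≤ cq m * ‖z‖ ^ (Q m).natDegree :=
          mul_le_mul_of_nonneg_left (one_le_pow₀ h2) (hcqpos m).le
        _ ≤ _ := h1
    have hE3 : ∀ᶠ z : ℂ in cobounded ℂ, ∀ j k, j ≠ k → ‖z‖ ≤ ‖Pjk j k z‖ := by
      refine Filter.eventually_all.mpr fun j => Filter.eventually_all.mpr fun k => ?_
      by_cases hjk : j = k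
      · exact Eventually.of_forall fun z h => absurd hjk h
      · filter_upwards [hplow j k hjk] with z hz _
        exact hz
    have hE4 : ∀ᶠ z : ℂ in cobounded ℂ, ∀ j m,
        Cq j * ‖z‖ ^ (Q j).natDegree * Real.exp (-(‖z‖ ^ α)) ≤ ε / (2 * N) * cq m :=
      Filter.eventually_all.mpr fun j => Filter.eventually_all.mpr fun m => hsmall j m
    filter_upwards [tendsto_norm_cobounded_atTop.eventually_ge_atTop 1, hE2, hE3, hE4] with
      z h1 h2 h3 h4
    exact ⟨h1, h2, h3, h4⟩
  -- extract R₀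
  rw [← comap_norm_atTop, Filter.eventually_comap, Filter.eventually_atTop] at hBig
  obtain ⟨R, hR⟩ := hBig
  refine ⟨max R 1, lt_of_lt_of_le one_pos (le_max_right _ _), ?_⟩
  intro z hz hsep m hmax
  have hzn : ‖z‖ = ‖z‖ := rfl
  rw [hzn] at hz
  obtain ⟨hz1, hQlow, hPlow, hSm⟩ :=
    hR ‖z‖ (le_trans (le_max_left _ _) hz) z rfl
  -- notation
  set A : Fin N → ℂ := fun j => b j * z ^ d + (P j).eval z with hA
  have hQm0 : (Q m).eval z ≠ 0 := by
    intro h0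
    have := hQlow m
    rw [h0, norm_zero] at this
    exact absurd (lt_of_lt_of_le (hcqpos m) this) (lt_irrefl 0)
  have hD0 : (Q m).eval z * Complex.exp (A m) ≠ 0 :=
    mul_ne_zero hQm0 (Complex.exp_ne_zero _)
  -- the identity
  have hident : f z / ((Q m).eval z * Complex.exp (A m)) - 1 =
      ∑ j ∈ Finset.univ.erase m,
        ((Q j).eval z * Complex.exp (A j)) / ((Q m).eval z * Complex.exp (A m)) := by
    rw [hf z]
    rw [← Finset.sum_erase_add Finset.univ _ (Finset.mem_univ m)]
    rw [add_div, Finset.sum_div, div_self hD0]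
    ring
  -- per-term bound
  have hterm : ∀ j ∈ Finset.univ.erase m,
      ‖((Q j).eval z * Complex.exp (A j)) / ((Q m).eval z * Complex.exp (A m))‖
        ≤ ε / (2 * N) := by
    intro j hj
    have hjm : j ≠ m := Finset.ne_of_mem_erase hj
    have hdiff : Pjk j m z = A j - A m := by
      rw [hPjk]; simp only [hA]; ring
    have hre1 : (Pjk j m z).re ≤ 0 := by
      rw [hdiff, Complex.sub_re]
      have := hmax j
      simp only [hA]
      linarith [hmax j]
    have hre2 : ‖z‖ ^ α ≤ -(Pjk j m z).re := by
      have hs := hsep j m hjm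
      rw [abs_of_nonpos hre1] at hs
      calc ‖z‖ ^ α ≤ ‖Pjk j m z‖ ^ α := by
            refine Real.rpow_le_rpow (norm_nonneg z) ?_ hα.le
            exact hPlow j m hjm
        _ ≤ -(Pjk j m z).re := hs
    have habs : ‖((Q j).eval z * Complex.exp (A j)) /
        ((Q m).eval z * Complex.exp (A m))‖ =
        ‖(Q j).eval z‖ * Real.exp ((A j - A m).re) / ‖(Q m).eval z‖ := by
      rw [norm_div, norm_mul, norm_mul, Complex.norm_exp, Complex.norm_exp,
        Complex.sub_re, Real.exp_sub]
      ring
    rw [habs, ← hdiff]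
    have hnum : ‖(Q j).eval z‖ * Real.exp ((Pjk j m z).re) ≤ ε / (2 * N) * cq m := by
      calc ‖(Q j).eval z‖ * Real.exp ((Pjk j m z).re)
          ≤ (Cq j * ‖z‖ ^ (Q j).natDegree) * Real.exp (-(‖z‖ ^ α)) := by
            refine mul_le_mul (hCq j z hz1) (Real.exp_le_exp.mpr (by linarith))
              (Real.exp_nonneg _) (mul_nonneg (hCqpos j).le (by positivity))
        _ ≤ ε / (2 * N) * cq m := hSm j m
    calc ‖(Q j).eval z‖ * Real.exp ((Pjk j m z).re) / ‖(Q m).eval z‖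
        ≤ (ε / (2 * N) * cq m) / cq m := by
          refine div_le_div₀ (mul_nonneg hδ.le (hcqpos m).le) hnum (hcqpos m) (hQlow m)
      _ = ε / (2 * N) := mul_div_cancel_right₀ _ (ne_of_gt (hcqpos m))
  -- sum up
  calc ‖f z / ((Q m).eval z * Complex.exp (A m)) - 1‖
      = ‖∑ j ∈ Finset.univ.erase m,
          ((Q j).eval z * Complex.exp (A j)) / ((Q m).eval z * Complex.exp (A m))‖ := by
        rw [hident]
    _ ≤ ∑ j ∈ Finset.univ.erase m, ‖
          ((Q j).eval z * Complex.exp (A j)) / ((Q m).eval z * Complex.exp (A m))‖ := by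
        exact norm_sum_le _ _
    _ ≤ ∑ _j ∈ Finset.univ.erase m, (ε / (2 * N)) := Finset.sum_le_sum hterm
    _ = (Finset.univ.erase m).card * (ε / (2 * N)) := by
        rw [Finset.sum_const, nsmul_eq_mul]
    _ ≤ N * (ε / (2 * N)) := by
        refine mul_le_mul_of_nonneg_right ?_ hδ.le
        have : (Finset.univ.erase m).card ≤ N := by
          calc (Finset.univ.erase m).card ≤ (Finset.univ : Finset (Fin N)).card :=
            Finset.card_le_card (Finset.erase_subset _ _)
          _ = N := by simp
        exact_mod_cast this
    _ = ε / 2 := by field_simp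
    _ < ε := by linarith
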